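/- Let d ≥ 2, p ≥ 2 and m ≥ 2 be integers with 1/p + 1/m < 1/2. If (n_0, …, n_{d−2}) is a tuple of rational numbers such that ∑_{j=0}^{d−2} n_j ζ_d^{j(β+1)} = 0 for every integer β with 0 ≤ β ≤ d−2 and (β+1)/d < 1 − 1/m − 1/p, then n_j = 0 for every j. -/

import Mathlib

open scoped BigOperators

/-- The standard primitive `d`-th root of unity `exp(2πi/d)`. -/
noncomputable def zeta (d : ℕ) : ℂ := Complex.exp (2 * Real.pi * Complex.I / d)

theorem stmt2 (d p m : ℕ) (hd : 2 ≤ d) (hp : 2 ≤ p) (hm : 2 ≤ m)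
    (h : (1 : ℚ) / p + 1 / m < 1 / 2)
    (n : Fin (d - 1) → ℚ)
    (hn : ∀ β : ℕ, β ≤ d - 2 → ((β : ℚ) + 1) / d < 1 - 1 / m - 1 / p →
      ∑ j : Fin (d - 1), (n j : ℂ) * zeta d ^ ((j : ℕ) * (β + 1)) = 0) :
    ∀ j, n j = 0 := by
  have hd0 : d ≠ 0 := by omega
  have hζ : IsPrimitiveRoot (zeta d) d := Complex.isPrimitiveRoot_exp d hd0
  set ζ := zeta d with hζdef
  have hζd : ζ ^ d = 1 := hζ.pow_eq_one
  have hζ0 : ζ ≠ 0 := by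
    intro h0
    rw [h0, zero_pow hd0] at hζd
    exact zero_ne_one hζd
  have habs : ‖ζ‖ = 1 := by
    simp [hζdef, zeta, Complex.norm_exp, Complex.div_re, Complex.mul_re, Complex.mul_im]
  have hconjζ : (starRingEnd ℂ) ζ = ζ⁻¹ := (Complex.inv_eq_conj habs).symm
  -- Step 1
  have key1 : ∀ α : ℕ, 1 ≤ α → 2 * α ≤ d →
      ∑ j : Fin (d - 1), (n j : ℂ) * ζ ^ ((j : ℕ) * α) = 0 := by
    intro α h1 h2
    have hq : ((↑(α - 1) : ℚ) + 1) / d < 1 - 1 / m - 1 / p := by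
      have hc : ((↑(α - 1) : ℚ) + 1) = (α : ℚ) := by
        rw [Nat.cast_sub h1]; push_cast; ring
      rw [hc]
      have hdq : (0 : ℚ) < d := by exact_mod_cast Nat.pos_of_ne_zero hd0
      have hαd : (α : ℚ) / d ≤ 1 / 2 := by
        rw [div_le_div_iff₀ hdq (by norm_num)]
        have : (2 * α : ℚ) ≤ d := by exact_mod_cast h2
        linarith
      linarith
    have := hn (α - 1) (by omega) hq
    rwa [Nat.sub_add_cancel h1] at this
  -- Step 2: conjugation symmetry
  have key2 : ∀ α : ℕ, 1 ≤ α → 2 * α ≤ d →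
      ∑ j : Fin (d - 1), (n j : ℂ) * ζ ^ ((j : ℕ) * (d - α)) = 0 := by
    intro α h1 h2
    have h0 := key1 α h1 h2
    have hconj : (starRingEnd ℂ) (∑ j : Fin (d - 1), (n j : ℂ) * ζ ^ ((j : ℕ) * α)) = 0 := by
      rw [h0, map_zero]
    rw [map_sum] at hconj
    rw [← hconj]
    apply Finset.sum_congr rfl
    intro j _
    rw [map_mul, map_pow, hconjζ, map_ratCast]
    congr 1
    have hexp : (j : ℕ) * (d - α) + (j : ℕ) * α = (j : ℕ) * d := by
      rw [← Nat.mul_add, Nat.sub_add_cancel (by omega : α ≤ d)]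
    have h1' : ζ ^ ((j : ℕ) * (d - α)) * ζ ^ ((j : ℕ) * α) = 1 := by
      rw [← pow_add, hexp, pow_mul', hζd, one_pow]
    rw [inv_pow]
    field_simp
    linear_combination h1'
  -- Step 3: all α from 1 to d-1
  have key3 : ∀ α : ℕ, 1 ≤ α → α ≤ d - 1 →
      ∑ j : Fin (d - 1), (n j : ℂ) * ζ ^ ((j : ℕ) * α) = 0 := by
    intro α h1 h2
    by_cases hc : 2 * α ≤ d
    · exact key1 α h1 hc
    · have := key2 (d - α) (by omega) (by omega)
      rwa [Nat.sub_sub_self (by omega : α ≤ d)] at this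
  -- Step 4: Vandermonde / polynomial argument
  set P : Polynomial ℂ :=
    ∑ j : Fin (d - 1), Polynomial.C ((n j : ℂ)) * Polynomial.X ^ (j : ℕ) with hP
  have heval : ∀ i : Fin (d - 1), P.eval (ζ ^ ((i : ℕ) + 1)) = 0 := by
    intro i
    have := key3 ((i : ℕ) + 1) (by omega) (by omega)
    rw [← this, hP, Polynomial.eval_finset_sum]
    apply Finset.sum_congr rfl
    intro j _
    rw [Polynomial.eval_mul, Polynomial.eval_C, Polynomial.eval_pow, Polynomial.eval_X,
      ← pow_mul, mul_comm ((i:ℕ)+1) (j:ℕ)]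
  have hinj : Function.Injective (fun i : Fin (d - 1) => ζ ^ ((i : ℕ) + 1)) := by
    intro a b hab
    have := hζ.pow_inj (by omega : (a : ℕ) + 1 < d) (by omega : (b : ℕ) + 1 < d) hab
    exact Fin.ext (by omega)
  have hdeg : P.natDegree < Fintype.card (Fin (d - 1)) := by
    rw [Fintype.card_fin]
    have : P.natDegree ≤ d - 2 := by
      rw [hP]
      apply Polynomial.natDegree_sum_le_of_forall_le
      intro j _
      apply le_trans (Polynomial.natDegree_C_mul_le _ _)
      rw [Polynomial.natDegree_X_pow]
      omega
    omega
  have hP0 : P = 0 :=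
    Polynomial.eq_zero_of_natDegree_lt_card_of_eval_eq_zero P hinj heval hdeg
  intro j
  have hcoeff : P.coeff (j : ℕ) = (n j : ℂ) := by
    rw [hP, Polynomial.finset_sum_coeff]
    rw [Finset.sum_eq_single j]
    · simp
    · intro k _ hk
      rw [Polynomial.coeff_C_mul, Polynomial.coeff_X_pow]
      simp [Fin.val_eq_val, (by simpa [Fin.ext_iff, eq_comm] using hk : ¬ (j:ℕ) = (k:ℕ))]
    · simp
  rw [hP0, Polynomial.coeff_zero] at hcoeff
  exact_mod_cast hcoeff.symm
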